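/- Let $N>2$ and suppose $u$ is a positive $C^2$ radial solution of $u''+\frac{N-1}{r}u'+f(u)=0$ on $(0,\infty)$ such that the Pohozaev functional $P(r)=\frac12 r^N u'(r)^2 + r^N F_0(u(r)) + \frac{N-2}{2} r^{N-1} u(r)u'(r)$ satisfies $P(r)\to 0$ as $r\to 0^+$, and $Q(v):=vf(v)-(p_S+1)\int_0^v f \geq 0$ for $v\geq 0$ with $f>0$ on $(0,\infty)$. If $u(r_0)=0$ at some $r_0>0$ with $u'(r_0)<0$, then we reach a contradiction; hence $u(r)>0$ for all $r>0$. -/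

import Mathlib

open Real Filter Set Topology MeasureTheory intervalIntegral

theorem stmt10 (N : ℕ) (hN : 2 < N) (f : ℝ → ℝ)
    (hfc : ContinuousOn f (Set.Ici 0)) (hf0 : f 0 = 0)
    (hfpos : ∀ v > (0:ℝ), 0 < f v)
    (hQ : ∀ v ≥ (0:ℝ),
      (2 * (N : ℝ) / ((N : ℝ) - 2)) * (∫ s in (0:ℝ)..v, f s) ≤ v * f v)
    (u : ℝ → ℝ) (hu2 : ContDiffOn ℝ 2 u (Set.Ioi 0))
    (hode : ∀ r > (0:ℝ),
      deriv (deriv u) r + ((N : ℝ) - 1) / r * deriv u r + f (u r) = 0)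
    (hpos0 : ∃ ε > (0:ℝ), ∀ r ∈ Set.Ioo 0 ε, 0 < u r)
    (hP : Tendsto (fun r : ℝ =>
        (1 / 2) * r ^ N * (deriv u r) ^ 2 + r ^ N * (∫ s in (0:ℝ)..(u r), f s)
          + ((N : ℝ) - 2) / 2 * r ^ (N - 1) * u r * deriv u r)
      (𝓝[>] 0) (𝓝 0)) :
    ∀ r > (0:ℝ), 0 < u r := by
  obtain ⟨m, rfl⟩ : ∃ m, N = m + 3 := ⟨N - 3, by omega⟩
  -- extend f continuously to all of ℝ
  set g : ℝ → ℝ := fun v => f (max v 0) with hgdef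
  have hgc : Continuous g :=
    hfc.comp_continuous (continuous_id.max continuous_const) (fun x => le_max_right x 0)
  have hgf : ∀ v ≥ (0:ℝ), g v = f v := fun v hv => by
    simp only [hgdef, max_eq_left hv]
  set F : ℝ → ℝ := fun v => ∫ s in (0:ℝ)..v, g s with hFdef
  have hFg : ∀ v ≥ (0:ℝ), F v = ∫ s in (0:ℝ)..v, f s := by
    intro v hv
    apply intervalIntegral.integral_congr
    intro s hs
    rw [Set.uIcc_of_le hv] at hs
    exact hgf s hs.1
  have hFd : ∀ v : ℝ, HasDerivAt F (g v) v := fun v =>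
    (hgc.integral_hasStrictDerivAt 0 v).hasDerivAt
  have hFdiff : Differentiable ℝ F := fun v => (hFd v).differentiableAt
  have hFcont : Continuous F := hFdiff.continuous
  -- derivative facts for u
  have hud : ∀ x > (0:ℝ), HasDerivAt u (deriv u x) x := fun x hx =>
    ((hu2.differentiableOn (by norm_num)).differentiableAt (Ioi_mem_nhds hx)).hasDerivAt
  have hd1 : ContDiffOn ℝ 1 (deriv u) (Set.Ioi 0) :=
    hu2.deriv_of_isOpen isOpen_Ioi (by norm_num)
  have hud2 : ∀ x > (0:ℝ), HasDerivAt (deriv u) (deriv (deriv u) x) x := fun x hx =>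
    ((hd1.differentiableOn (by norm_num)).differentiableAt (Ioi_mem_nhds hx)).hasDerivAt
  have hucont : ContinuousOn u (Set.Ioi 0) := hu2.continuousOn
  have hu'cont : ContinuousOn (deriv u) (Set.Ioi 0) := hd1.continuousOn
  -- Pohozaev functional (with the extended f)
  set P : ℝ → ℝ := fun r => (1 / 2) * r ^ (m + 3) * (deriv u r) ^ 2
      + r ^ (m + 3) * F (u r)
      + (((m : ℝ) + 3) - 2) / 2 * r ^ (m + 3 - 1) * u r * deriv u r with hPdef
  -- derivative of P
  have hPderiv : ∀ x : ℝ, 0 < x → 0 ≤ u x → HasDerivAt P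
      (x ^ (m + 2) * (((m : ℝ) + 3) * F (u x)
        - (((m : ℝ) + 3) - 2) / 2 * u x * g (u x))) x := by
    intro x hx hux
    have h1 := hud x hx
    have h2 := hud2 x hx
    have hFu : HasDerivAt (fun r => F (u r)) (g (u x) * deriv u x) x :=
      (hFd (u x)).comp x h1
    have t1 : HasDerivAt (fun r : ℝ => (1 / 2) * r ^ (m + 3) * (deriv u r) ^ 2)
        (((1 : ℝ) / 2 * ((m + 3 : ℕ) * x ^ (m + 3 - 1))) * (deriv u x) ^ 2
          + (1 / 2) * x ^ (m + 3) * ((2 : ℕ) * deriv u x ^ 1 * deriv (deriv u) x)) x :=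
      ((hasDerivAt_pow (m + 3) x).const_mul (1 / 2 : ℝ)).mul (h2.pow 2)
    have t2 : HasDerivAt (fun r : ℝ => r ^ (m + 3) * F (u r))
        (((m + 3 : ℕ) * x ^ (m + 3 - 1)) * F (u x)
          + x ^ (m + 3) * (g (u x) * deriv u x)) x :=
      (hasDerivAt_pow (m + 3) x).mul hFu
    have t3 : HasDerivAt (fun r : ℝ =>
        (((m : ℝ) + 3) - 2) / 2 * r ^ (m + 3 - 1) * u r * deriv u r)
        (((((m : ℝ) + 3) - 2) / 2 * ((m + 3 - 1 : ℕ) * x ^ (m + 3 - 1 - 1)) * u x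
          + (((m : ℝ) + 3) - 2) / 2 * x ^ (m + 3 - 1) * deriv u x) * deriv u x
          + (((m : ℝ) + 3) - 2) / 2 * x ^ (m + 3 - 1) * u x * deriv (deriv u) x) x :=
      ((((hasDerivAt_pow (m + 3 - 1) x).const_mul ((((m : ℝ) + 3) - 2) / 2)).mul h1).mul h2)
    have htot := (t1.add t2).add t3
    have hode' := hode x hx
    have hxne : x ≠ 0 := ne_of_gt hx
    have h2' : deriv (deriv u) x = -((((m : ℝ) + 3) - 1) / x * deriv u x) - g (u x) := by
      rw [hgf _ hux]
      push_cast at hode' ⊢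
      linarith
    refine htot.congr_deriv (Eq.symm ?_)
    rw [h2']
    have e1 : m + 3 - 1 = m + 2 := rfl
    have e2 : m + 3 - 1 - 1 = m + 1 := rfl
    rw [e2, e1]
    push_cast
    have hx1 : x ^ (m + 2) = x ^ (m + 1) * x := by ring
    have hx2 : x ^ (m + 3) = x ^ (m + 2) * x := by ring
    field_simp
    ring
  -- main argument
  intro r hr
  by_contra hur
  push_neg at hur
  obtain ⟨ε, hε, hεpos⟩ := hpos0
  set S : Set ℝ := {s | 0 < s ∧ u s ≤ 0} with hSdef
  have hrS : r ∈ S := ⟨hr, hur⟩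
  have hSne : S.Nonempty := ⟨r, hrS⟩
  have hlb : ∀ s ∈ S, ε ≤ s := by
    intro s hs
    by_contra h
    push_neg at h
    exact absurd (hεpos s ⟨hs.1, h⟩) (not_lt.2 hs.2)
  have hbdd : BddBelow S := ⟨ε, hlb⟩
  set r₀ := sInf S with hr₀def
  have hεr₀ : ε ≤ r₀ := le_csInf hSne hlb
  have hr₀pos : 0 < r₀ := lt_of_lt_of_le hε hεr₀
  have hSclosed : IsClosed S := by
    have hSeq : S = Set.Ici ε ∩ u ⁻¹' Set.Iic 0 := by
      ext s
      constructor
      · intro hs; exact ⟨hlb s hs, hs.2⟩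
      · intro hs; exact ⟨lt_of_lt_of_le hε hs.1, hs.2⟩
    rw [hSeq]
    exact (hucont.mono (fun x hx => lt_of_lt_of_le hε hx)).preimage_isClosed_of_isClosed
      isClosed_Ici isClosed_Iic
  have hr₀S : r₀ ∈ S := hSclosed.csInf_mem hSne hbdd
  have hupos : ∀ s ∈ Set.Ioo (0:ℝ) r₀, 0 < u s := by
    intro s hs
    by_contra h
    push_neg at h
    exact absurd (csInf_le hbdd ⟨hs.1, h⟩) (not_le.2 hs.2)
  have hu0 : u r₀ = 0 := by
    refine le_antisymm hr₀S.2 ?_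
    have hc : Tendsto u (𝓝[Set.Ioo (0:ℝ) r₀] r₀) (𝓝 (u r₀)) :=
      ((hucont.continuousAt (Ioi_mem_nhds hr₀pos)).tendsto).mono_left nhdsWithin_le_nhds
    haveI hne : (𝓝[Set.Ioo (0:ℝ) r₀] r₀).NeBot := by
      apply mem_closure_iff_nhdsWithin_neBot.1
      rw [closure_Ioo (ne_of_lt hr₀pos)]
      exact ⟨hr₀pos.le, le_rfl⟩
    exact ge_of_tendsto hc (eventually_nhdsWithin_of_forall (fun s hs => (hupos s hs).le))
  have hIoc : Set.Ioc (0:ℝ) r₀ ⊆ Set.Ioi 0 := fun s hs => hs.1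
  have hunn : ∀ s ∈ Set.Ioc (0:ℝ) r₀, 0 ≤ u s := by
    intro s hs
    rcases eq_or_lt_of_le hs.2 with h | h
    · rw [h, hu0]
    · exact (hupos s ⟨hs.1, h⟩).le
  -- P is antitone on Ioc 0 r₀
  have hPcont : ContinuousOn P (Set.Ioc 0 r₀) := by
    refine ContinuousOn.add (ContinuousOn.add ?_ ?_) ?_
    · exact ((continuous_const.mul (continuous_pow (m + 3))).continuousOn.mul
        ((hu'cont.mono hIoc).pow 2))
    · exact (continuous_pow (m + 3)).continuousOn.mul
        (hFcont.comp_continuousOn (hucont.mono hIoc))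
    · exact (((continuous_const.mul (continuous_pow (m + 3 - 1))).continuousOn.mul
        (hucont.mono hIoc)).mul (hu'cont.mono hIoc))
  have hN2 : (0:ℝ) < ((m : ℝ) + 3) - 2 := by linarith [Nat.cast_nonneg (α := ℝ) m]
  have hPanti : AntitoneOn P (Set.Ioc 0 r₀) := by
    apply antitoneOn_of_deriv_nonpos (convex_Ioc _ _) hPcont
    · intro x hx
      rw [interior_Ioc] at hx
      exact (hPderiv x hx.1 (hupos x hx).le).differentiableAt.differentiableWithinAt
    · intro x hx
      rw [interior_Ioc] at hx
      rw [(hPderiv x hx.1 (hupos x hx).le).deriv]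
      have hux := hupos x hx
      have hq := hQ (u x) hux.le
      rw [← hFg _ hux.le] at hq
      rw [hgf _ hux.le]
      have hxp : (0:ℝ) ≤ x ^ (m + 2) := pow_nonneg hx.1.le _
      push_cast at hq ⊢
      rw [div_mul_eq_mul_div, div_le_iff₀ hN2] at hq
      have hfac : ((m : ℝ) + 3) * F (u x) - (((m : ℝ) + 3) - 2) / 2 * u x * f (u x) ≤ 0 := by
        push_cast at hq
        linarith
      exact mul_nonpos_iff.mpr (Or.inl ⟨hxp, hfac⟩)
  -- P r₀ ≤ 0
  have hPr₀ : P r₀ ≤ 0 := by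
    have hPeq : (fun r : ℝ =>
        (1 / 2) * r ^ (m + 3) * (deriv u r) ^ 2 + r ^ (m + 3) * (∫ s in (0:ℝ)..(u r), f s)
          + (((m : ℝ) + 3) - 2) / 2 * r ^ (m + 3 - 1) * u r * deriv u r)
        =ᶠ[𝓝[>] (0:ℝ)] P := by
      filter_upwards [Ioo_mem_nhdsGT_of_mem (Set.left_mem_Ico.2 hε)] with s hs
      have := hFg (u s) (hεpos s hs).le
      simp only [hPdef, this]
    have hP' : Tendsto P (𝓝[>] (0:ℝ)) (𝓝 0) := by
      refine Tendsto.congr' hPeq ?_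
      convert hP using 2 with s
      push_cast
      ring
    have hev : ∀ᶠ s in 𝓝[>] (0:ℝ), P r₀ ≤ P s := by
      filter_upwards [Ioo_mem_nhdsGT_of_mem (Set.left_mem_Ico.2 hr₀pos)] with s hs
      exact hPanti ⟨hs.1, hs.2.le⟩ (Set.right_mem_Ioc.2 hr₀pos) hs.2.le
    exact ge_of_tendsto hP' hev
  -- deriv u r₀ = 0
  have hF0 : F 0 = 0 := by simp [hFdef]
  have hdu0 : deriv u r₀ = 0 := by
    have hPv : P r₀ = 1 / 2 * r₀ ^ (m + 3) * (deriv u r₀) ^ 2 := by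
      simp [hPdef, hu0, hF0]
    have hrp : (0:ℝ) < r₀ ^ (m + 3) := pow_pos hr₀pos _
    have hsq : (deriv u r₀) ^ 2 ≤ 0 := by
      by_contra hb
      push_neg at hb
      have hm := mul_pos hrp hb
      rw [hPv] at hPr₀
      linarith
    exact pow_eq_zero_iff (n := 2) (by norm_num) |>.1
      (le_antisymm hsq (sq_nonneg _))
  -- the function s ^ (N-1) * u' s is strictly decreasing on (0, r₀]
  set G : ℝ → ℝ := fun s => s ^ (m + 2) * deriv u s with hGdef
  have hGderiv : ∀ x ∈ Set.Ioo (0:ℝ) r₀, HasDerivAt G (-(x ^ (m + 2) * f (u x))) x := by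
    intro x hx
    have h1 := (hasDerivAt_pow (m + 2) x).mul (hud2 x hx.1)
    have hode' := hode x hx.1
    have hxne : x ≠ 0 := ne_of_gt hx.1
    have h2' : deriv (deriv u) x = -((((m : ℝ) + 3) - 1) / x * deriv u x) - f (u x) := by
      push_cast at hode' ⊢
      linarith
    refine h1.congr_deriv (Eq.symm ?_)
    rw [h2']
    have e2 : m + 2 - 1 = m + 1 := rfl
    rw [e2]
    push_cast
    field_simp
    ring
  have hGcont : ContinuousOn G (Set.Ioc 0 r₀) :=
    (continuous_pow (m + 2)).continuousOn.mul (hu'cont.mono hIoc)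
  have hGanti : StrictAntiOn G (Set.Ioc 0 r₀) := by
    apply strictAntiOn_of_deriv_neg (convex_Ioc _ _) hGcont
    intro x hx
    rw [interior_Ioc] at hx
    rw [(hGderiv x hx).deriv]
    have : 0 < x ^ (m + 2) * f (u x) :=
      mul_pos (pow_pos hx.1 _) (hfpos _ (hupos x hx))
    linarith
  have hG0 : G r₀ = 0 := by simp [hGdef, hdu0]
  have hdpos : ∀ x ∈ Set.Ioo (0:ℝ) r₀, 0 < deriv u x := by
    intro x hx
    have h := hGanti ⟨hx.1, hx.2.le⟩ (Set.right_mem_Ioc.2 hr₀pos) hx.2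
    rw [hG0] at h
    simp only [hGdef] at h
    by_contra hc
    push_neg at hc
    nlinarith [mul_nonneg (pow_pos hx.1 (m + 2)).le (neg_nonneg.2 hc)]
  have hmono : StrictMonoOn u (Set.Ioc 0 r₀) := by
    apply strictMonoOn_of_deriv_pos (convex_Ioc _ _) (hucont.mono hIoc)
    intro x hx
    rw [interior_Ioc] at hx
    exact hdpos x hx
  have hs2 : r₀ / 2 ∈ Set.Ioo (0:ℝ) r₀ := ⟨by linarith, by linarith⟩
  have hlt := hmono ⟨hs2.1, hs2.2.le⟩ (Set.right_mem_Ioc.2 hr₀pos) hs2.2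
  rw [hu0] at hlt
  exact absurd hlt (not_lt.2 (hupos _ hs2).le)
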